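/- Let p be a prime, K a finite extension of ℚ_p with ring of integers 𝔬 and normalized additive valuation ord. Let B ∈ 𝓗_n(𝔬)^{nd}, let (a_1,…,a_n) = GK(B) be its Gross–Keating invariant, and let 1 ≤ r ≤ n−1. Then for every X ∈ M_{n,r}(𝔬) with det(ᵗX·B·X) ≠ 0, one has 𝔢_r(GK(B)) ≤ ord(2^{2⌊r/2⌋}·det(ᵗX·B·X)). -/

import Mathlib

open scoped Classical
open Matrix Finset

section Aux
variable {K : Type} [Field K] (v : AddValuation K (WithTop ℤ))

lemma vprod {ι : Type*} (s : Finset ι) (f : ι → K) :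
    v (∏ i ∈ s, f i) = ∑ i ∈ s, v (f i) := by
  classical
  induction s using Finset.cons_induction with
  | empty => simp
  | cons a s ha ih => rw [Finset.prod_cons, Finset.sum_cons, v.map_mul, ih]

lemma half_le {x y : WithTop ℤ} (h : y + y ≤ x + x) : y ≤ x := by
  cases x with
  | top => exact le_top
  | coe x =>
    cases y with
    | top => simp [← WithTop.coe_add] at h
    | coe y =>
      rw [← WithTop.coe_add, ← WithTop.coe_add, WithTop.coe_le_coe] at h
      exact WithTop.coe_le_coe.mpr (by omega)

lemma vneg_one : v (-1 : K) = 0 := by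
  have h : v (-1 : K) + v (-1) = 0 := by
    rw [← v.map_mul, neg_mul_neg, one_mul, v.map_one]
  cases hx : v (-1 : K) with
  | top => rw [hx] at h; simp at h
  | coe x =>
    rw [hx, ← WithTop.coe_add] at h
    have : x + x = 0 := by exact_mod_cast h
    have : x = 0 := by omega
    simp [this]

lemma vsign_mul {r : ℕ} (σ : Equiv.Perm (Fin r)) (x : K) :
    v (((Equiv.Perm.sign σ : ℤ) : K) * x) = v x := by
  rcases Int.units_eq_one_or (Equiv.Perm.sign σ) with h | h <;> rw [h]
  · simp
  · push_cast
    rw [neg_one_mul, ← neg_one_mul x, v.map_mul, vneg_one, zero_add]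

/-- valuation of a determinant is at least the min over permutations. -/
lemma vdet_ge {r : ℕ} (D : Matrix (Fin r) (Fin r) K) (t : WithTop ℤ)
    (h : ∀ σ : Equiv.Perm (Fin r), t ≤ ∑ i, v (D (σ i) i)) :
    t ≤ v D.det := by
  rw [Matrix.det_apply']
  refine v.map_le_sum fun σ _ => ?_
  rw [vsign_mul, vprod]
  exact h σ

lemma vdet_nonneg {r : ℕ} (D : Matrix (Fin r) (Fin r) K)
    (h : ∀ i j, 0 ≤ v (D i j)) : 0 ≤ v D.det :=
  vdet_ge v D 0 fun σ => Finset.sum_nonneg fun i _ => h _ _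

end Aux


section CB
variable {K : Type} [Field K] 
local notation "ε " σ:arg => ((Equiv.Perm.sign σ : ℤ) : K)

/-- Expansion of `det (N * Y)` over functions. -/
lemma detExp {r n : ℕ} (N : Matrix (Fin r) (Fin n) K) (Y : Matrix (Fin n) (Fin r) K) :
    (N * Y).det = ∑ g : Fin r → Fin n, (N.submatrix id g).det * ∏ i, Y (g i) i := by
  calc (N * Y).det
      = ∑ σ : Equiv.Perm (Fin r), ε σ * ∏ i, ∑ k, N (σ i) k * Y k i := by
        simp only [Matrix.det_apply', Matrix.mul_apply]
    _ = ∑ σ : Equiv.Perm (Fin r), ∑ g : Fin r → Fin n,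
          ε σ * ∏ i, (N (σ i) (g i) * Y (g i) i) := by
        refine Finset.sum_congr rfl fun σ _ => ?_
        rw [Finset.prod_univ_sum, Finset.mul_sum]
        simp [Fintype.piFinset_univ]
    _ = ∑ g : Fin r → Fin n, ∑ σ : Equiv.Perm (Fin r),
          (ε σ * ∏ i, N (σ i) (g i)) * ∏ i, Y (g i) i := by
        rw [Finset.sum_comm]
        refine Finset.sum_congr rfl fun g _ => Finset.sum_congr rfl fun σ _ => ?_
        rw [Finset.prod_mul_distrib, mul_assoc]
    _ = ∑ g : Fin r → Fin n, (N.submatrix id g).det * ∏ i, Y (g i) i := by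
        refine Finset.sum_congr rfl fun g _ => ?_
        rw [← Finset.sum_mul, Matrix.det_apply']
        simp [Matrix.submatrix_apply]

noncomputable def emb {n r : ℕ} (S : {S : Finset (Fin n) // S.card = r}) : Fin r → Fin n :=
  fun i => S.1.orderEmbOfFin S.2 i

lemma emb_strictMono {n r : ℕ} (S : {S : Finset (Fin n) // S.card = r}) :
    StrictMono (emb S) := (S.1.orderEmbOfFin S.2).strictMono

lemma emb_image {n r : ℕ} (S : {S : Finset (Fin n) // S.card = r}) :
    Finset.image (emb S) Finset.univ = S.1 := by
  ext x
  simp only [Finset.mem_image, Finset.mem_univ, true_and]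
  constructor
  · rintro ⟨i, rfl⟩; exact S.1.orderEmbOfFin_mem S.2 i
  · intro hx
    have := Finset.range_orderEmbOfFin S.1 S.2
    have hx' : x ∈ Set.range (S.1.orderEmbOfFin S.2) := by rw [this]; exact hx
    obtain ⟨i, hi⟩ := hx'
    exact ⟨i, hi⟩

/-- Cauchy–Binet. -/
lemma cauchyBinet {r n : ℕ} (N : Matrix (Fin r) (Fin n) K) (Y : Matrix (Fin n) (Fin r) K) :
    (N * Y).det = ∑ S : {S : Finset (Fin n) // S.card = r},
      (N.submatrix id (emb S)).det * (Y.submatrix (emb S) id).det := by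
  classical
  rw [detExp]
  have hzero : ∀ g : Fin r → Fin n, ¬ Function.Injective g →
      (N.submatrix id g).det * ∏ i, Y (g i) i = 0 := by
    intro g hg
    rw [Function.not_injective_iff] at hg
    obtain ⟨i, j, hij, hne⟩ := hg
    rw [Matrix.det_zero_of_column_eq hne (fun k => by simp [Matrix.submatrix_apply, hij]),
      zero_mul]
  rw [← Finset.sum_filter_of_ne (p := fun g => Function.Injective g)
    (fun g _ hne => by by_contra h; exact hne (hzero g h))]
  have key : ∑ q : {S : Finset (Fin n) // S.card = r} × Equiv.Perm (Fin r),
        (N.submatrix id (emb q.1 ∘ q.2)).det * ∏ i, Y ((emb q.1 ∘ q.2) i) i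
      = ∑ g ∈ Finset.univ.filter (fun g : Fin r → Fin n => Function.Injective g),
      (N.submatrix id g).det * ∏ i, Y (g i) i := by
    refine Finset.sum_bij' (i := fun q _ => emb q.1 ∘ q.2)
      (j := fun g hg =>
        (⟨Finset.image g Finset.univ, by
          rw [Finset.card_image_of_injective _ (by simpa using hg), Finset.card_univ,
            Fintype.card_fin]⟩,
         Equiv.ofBijective (fun i => (Finset.orderIsoOfFin _ (by
            rw [Finset.card_image_of_injective _ (by simpa using hg), Finset.card_univ,
              Fintype.card_fin] : (Finset.image g Finset.univ).card = r)).symm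
              ⟨g i, by simp⟩)
          (Finite.injective_iff_bijective.mp (fun x y hxy => by
            apply (show Function.Injective g by simpa using hg)
            have h2 := (Finset.orderIsoOfFin (Finset.image g Finset.univ) (by
              rw [Finset.card_image_of_injective _ (by simpa using hg), Finset.card_univ,
                Fintype.card_fin])).symm.injective hxy
            exact congrArg Subtype.val h2)))) ?_ ?_ ?_ ?_ ?_
    · intro q hq
      simp only [Finset.mem_filter, Finset.mem_univ, true_and]
      exact (emb_strictMono q.1).injective.comp q.2.injective
    · intro g hg; exact Finset.mem_univ _
    · intro q hq
      obtain ⟨S, ρ⟩ := q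
      have himg : Finset.image (emb S ∘ ρ) Finset.univ = S.1 := by
        rw [← Finset.image_image, Finset.image_univ_equiv, emb_image]
      have hemb : ∀ (T : Finset (Fin n)) (hT : T.card = r), T = S.1 →
          ∀ i, T.orderEmbOfFin hT i = S.1.orderEmbOfFin S.2 i := by
        rintro T hT rfl i; rfl
      refine Prod.ext (Subtype.ext (by simpa using himg)) ?_
      refine Equiv.ext fun i => ?_
      simp only [Equiv.ofBijective_apply]
      rw [OrderIso.symm_apply_eq]
      refine Subtype.ext ?_
      rw [Finset.coe_orderIsoOfFin_apply]
      exact (hemb _ _ himg (ρ i)).symm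
    · intro g hg
      funext i
      simp only [Equiv.ofBijective_apply, Function.comp_apply, emb]
      rw [← Finset.coe_orderIsoOfFin_apply, OrderIso.apply_symm_apply]
    · intro q hq; rfl
  rw [← key, Fintype.sum_prod_type]
  refine Finset.sum_congr rfl fun S _ => ?_
  have hperm : ∀ ρ : Equiv.Perm (Fin r),
      (N.submatrix id (emb S ∘ ρ)).det = ε ρ * (N.submatrix id (emb S)).det := by
    intro ρ
    have h : N.submatrix id (emb S ∘ ρ) = (N.submatrix id (emb S)).submatrix id ρ := by
      rw [Matrix.submatrix_submatrix]; rfl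
    rw [h, Matrix.det_permute']
  calc ∑ ρ : Equiv.Perm (Fin r), (N.submatrix id (emb S ∘ ρ)).det * ∏ i, Y ((emb S ∘ ρ) i) i
      = (N.submatrix id (emb S)).det * ∑ ρ : Equiv.Perm (Fin r),
          ε ρ * ∏ i, Y (emb S (ρ i)) i := by
        rw [Finset.mul_sum]
        refine Finset.sum_congr rfl fun ρ _ => ?_
        rw [hperm ρ]
        simp only [Function.comp_apply]
        ring
    _ = (N.submatrix id (emb S)).det * (Y.submatrix (emb S) id).det := by
        congr 1
        rw [Matrix.det_apply']
        exact Finset.sum_congr rfl fun ρ _ => by simp [Matrix.submatrix_apply]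

end CB

lemma even_card_aux {α : Type*} [DecidableEq α] (σ : α → α) (hσ : ∀ x, σ (σ x) = x) :
    ∀ (m : ℕ) (s : Finset α), s.card = m → (∀ x ∈ s, σ x ∈ s) → (∀ x ∈ s, σ x ≠ x) →
      Even s.card := by
  intro m
  induction m using Nat.strong_induction_on with
  | _ m ih =>
    intro s hcard hmem hne
    rcases s.eq_empty_or_nonempty with rfl | ⟨x, hx⟩
    · simp
    · have hxs : σ x ∈ s := hmem x hx
      have hxne : σ x ≠ x := hne x hx
      set s' := (s.erase x).erase (σ x) with hs'
      have hmem' : σ x ∈ s.erase x := Finset.mem_erase.mpr ⟨hxne, hxs⟩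
      have hcard' : s'.card = s.card - 2 := by
        rw [hs', Finset.card_erase_of_mem hmem', Finset.card_erase_of_mem hx]
        omega
      have hcard2 : 2 ≤ s.card := by
        have := Finset.card_erase_of_mem hx
        have h1 : 1 ≤ (s.erase x).card := Finset.card_pos.mpr ⟨σ x, hmem'⟩
        omega
      have hsub : ∀ y ∈ s', y ∈ s := fun y hy =>
        Finset.mem_of_mem_erase (Finset.mem_of_mem_erase hy)
      have hmm : ∀ y ∈ s', σ y ∈ s' := by
        intro y hy
        have hys : y ∈ s := hsub y hy
        have hyx : y ≠ σ x := (Finset.mem_erase.mp hy).1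
        have hyx' : y ≠ x := (Finset.mem_erase.mp (Finset.mem_of_mem_erase hy)).1
        refine Finset.mem_erase.mpr ⟨?_, Finset.mem_erase.mpr ⟨?_, hmem y hys⟩⟩
        · intro h; exact hyx' (by rw [← hσ y, h, hσ x])
        · intro h; exact hyx (by rw [← hσ y, h])
      have hne' : ∀ y ∈ s', σ y ≠ y := fun y hy => hne y (hsub y hy)
      have hev := ih (m - 2) (by omega) s' (by omega) hmm hne'
      have : s.card = s'.card + 2 := by omega
      rw [this]
      exact hev.add (even_two)

section Bounds
variable {K : Type} [Field K] (v : AddValuation K (WithTop ℤ))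

/-- Even-type bound: works for any square matrix with graded off-diagonal bounds. -/
lemma det_bound {r : ℕ} (D : Matrix (Fin r) (Fin r) K) (c d : Fin r → WithTop ℤ)
    (hb : ∀ i j, c i + d j ≤ v (2 * D i j) + v (2 * D i j)) (t : WithTop ℤ)
    (ht : t + t ≤ (∑ i, c i) + ∑ i, d i) :
    t ≤ v ((2 : K) ^ r * D.det) := by
  have hsm : (2 : K) ^ r * D.det = ((2 : K) • D).det := by
    rw [Matrix.det_smul, Fintype.card_fin]
  rw [hsm]
  refine vdet_ge v _ t fun σ => ?_
  have heq : ∀ i, ((2 : K) • D) (σ i) i = 2 * D (σ i) i := fun i => rfl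
  refine half_le ?_
  calc t + t ≤ (∑ i, c i) + ∑ i, d i := ht
    _ = (∑ i, c (σ i)) + ∑ i, d i := by rw [Equiv.sum_comp σ c]
    _ = ∑ i, (c (σ i) + d i) := (Finset.sum_add_distrib).symm
    _ ≤ ∑ i, (v (2 * D (σ i) i) + v (2 * D (σ i) i)) :=
        Finset.sum_le_sum fun i _ => hb (σ i) i
    _ = (∑ i, v (((2 : K) • D) (σ i) i)) + ∑ i, v (((2 : K) • D) (σ i) i) := by
        rw [Finset.sum_add_distrib]
        simp only [heq]

/-- Odd-type bound for symmetric matrices. -/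
lemma det_bound_sym {r : ℕ} (hr : Odd r) (D : Matrix (Fin r) (Fin r) K) (hDs : Dᵀ = D)
    (c : Fin r → WithTop ℤ) (t : WithTop ℤ)
    (hdg : ∀ i, c i ≤ v (D i i))
    (hb : ∀ i j, c i + c j ≤ v (2 * D i j) + v (2 * D i j))
    (ht : t ≤ ∑ i, c i) (h2 : 0 ≤ v (2 : K)) :
    t ≤ v ((2 : K) ^ (r - 1) * D.det) := by
  classical
  have hsymm' : ∀ i j, D i j = D j i := fun i j => by
    have h := congrFun (congrFun hDs j) i
    simpa using h
  set f : Equiv.Perm (Fin r) → K :=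
    fun σ => (2 : K) ^ (r - 1) * (((Equiv.Perm.sign σ : ℤ) : K) * ∏ i, D (σ i) i) with hf
  have hexp : (2 : K) ^ (r - 1) * D.det = ∑ σ : Equiv.Perm (Fin r), f σ := by
    rw [Matrix.det_apply', Finset.mul_sum]
  rw [hexp, ← Finset.sum_filter_add_sum_filter_not Finset.univ
    (fun σ : Equiv.Perm (Fin r) => σ * σ = 1)]
  have hfself : ∀ σ : Equiv.Perm (Fin r), σ * σ = 1 → ∀ x, σ (σ x) = x := by
    intro σ h x
    have := congrArg (fun τ : Equiv.Perm (Fin r) => τ x) h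
    simpa using this
  refine v.map_le_add ?_ ?_
  · -- involutions
    refine v.map_le_sum fun σ hσ => ?_
    have hinv : ∀ x, σ (σ x) = x := hfself σ (by simpa using hσ)
    set Fc := Finset.univ.filter (fun i : Fin r => ¬ σ i = i) with hFc
    have hmemFc : ∀ x ∈ Fc, σ x ∈ Fc := by
      intro x hxm
      have hx : ¬ σ x = x := by simpa [hFc] using hxm
      simp only [hFc, Finset.mem_filter, Finset.mem_univ, true_and]
      intro h; exact hx (σ.injective h)
    have hneFc : ∀ x ∈ Fc, σ x ≠ x := fun x hxm => by simpa [hFc] using hxm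
    have heven : Even Fc.card := even_card_aux σ hinv Fc.card Fc rfl hmemFc hneFc
    have hcardle : Fc.card ≤ r - 1 := by
      have h1 : Fc.card ≤ r := by
        simpa using Finset.card_filter_le Finset.univ (fun i : Fin r => ¬ σ i = i)
      rcases Nat.lt_or_ge Fc.card r with h | h
      · omega
      · exfalso
        have : Fc.card = r := le_antisymm h1 h
        rw [this] at heven
        exact (Nat.not_even_iff_odd.mpr hr) heven
    have hpow : (2 : K) ^ (r - 1) = 2 ^ (r - 1 - Fc.card) * 2 ^ Fc.card := by
      rw [← pow_add]; congr 1; omega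
    have hprodsplit : ∏ i, D (σ i) i =
        (∏ i ∈ Finset.univ.filter (fun i => σ i = i), D (σ i) i) * ∏ i ∈ Fc, D (σ i) i := by
      rw [hFc, Finset.prod_filter_mul_prod_filter_not]
    have h2prod : (2 : K) ^ Fc.card * ∏ i ∈ Fc, D (σ i) i = ∏ i ∈ Fc, (2 * D (σ i) i) := by
      rw [Finset.prod_mul_distrib, Finset.prod_const]
    have hfeq : f σ = ((Equiv.Perm.sign σ : ℤ) : K) * ((2 : K) ^ (r - 1 - Fc.card) *
        ((∏ i ∈ Finset.univ.filter (fun i => σ i = i), D (σ i) i) *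
          ∏ i ∈ Fc, (2 * D (σ i) i))) := by
      rw [hf]
      dsimp only
      rw [hprodsplit, ← h2prod, hpow]
      ring
    rw [hfeq, vsign_mul, v.map_mul, v.map_mul, vprod, vprod]
    have hv0 : (0 : WithTop ℤ) ≤ v ((2 : K) ^ (r - 1 - Fc.card)) := by
      rw [v.map_pow]
      exact nsmul_nonneg h2 _
    have hF : ∑ i ∈ Finset.univ.filter (fun i => σ i = i), c i ≤
        ∑ i ∈ Finset.univ.filter (fun i => σ i = i), v (D (σ i) i) := by
      refine Finset.sum_le_sum fun i hi => ?_
      have : σ i = i := by simpa using hi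
      rw [this]; exact hdg i
    have hFc2 : ∑ i ∈ Fc, c i ≤ ∑ i ∈ Fc, v (2 * D (σ i) i) := by
      refine half_le ?_
      have hcs : ∑ i ∈ Fc, c (σ i) = ∑ i ∈ Fc, c i := by
        refine Finset.sum_nbij' (fun i => σ i) (fun i => σ i) ?_ ?_ ?_ ?_ ?_
        · exact hmemFc
        · exact hmemFc
        · intro a _; exact hinv a
        · intro a _; exact hinv a
        · intro a _; rfl
      calc (∑ i ∈ Fc, c i) + ∑ i ∈ Fc, c i
          = (∑ i ∈ Fc, c (σ i)) + ∑ i ∈ Fc, c i := by rw [hcs]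
        _ = ∑ i ∈ Fc, (c (σ i) + c i) := (Finset.sum_add_distrib).symm
        _ ≤ ∑ i ∈ Fc, (v (2 * D (σ i) i) + v (2 * D (σ i) i)) :=
            Finset.sum_le_sum fun i _ => hb (σ i) i
        _ = (∑ i ∈ Fc, v (2 * D (σ i) i)) + ∑ i ∈ Fc, v (2 * D (σ i) i) :=
            Finset.sum_add_distrib
    calc t ≤ ∑ i, c i := ht
      _ = (∑ i ∈ Finset.univ.filter (fun i => σ i = i), c i) + ∑ i ∈ Fc, c i := by
          rw [hFc, Finset.sum_filter_add_sum_filter_not]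
      _ ≤ (∑ i ∈ Finset.univ.filter (fun i => σ i = i), v (D (σ i) i)) +
            ∑ i ∈ Fc, v (2 * D (σ i) i) := add_le_add hF hFc2
      _ ≤ v ((2 : K) ^ (r - 1 - Fc.card)) +
          ((∑ i ∈ Finset.univ.filter (fun i => σ i = i), v (D (σ i) i)) +
            ∑ i ∈ Fc, v (2 * D (σ i) i)) := le_add_of_nonneg_left hv0
      _ = _ := rfl
  · -- non-involutions: pair σ with σ⁻¹
    set κ : Equiv.Perm (Fin r) → ℕ := fun σ => (Fintype.equivFin (Equiv.Perm (Fin r)) σ : ℕ)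
      with hκ
    have hκinj : Function.Injective κ := by
      intro x y h
      exact (Fintype.equivFin (Equiv.Perm (Fin r))).injective (Fin.ext h)
    set NI := Finset.univ.filter (fun σ : Equiv.Perm (Fin r) => ¬ σ * σ = 1) with hNI
    have hinvNI : ∀ σ ∈ NI, σ⁻¹ ∈ NI := by
      intro σ hσ
      simp only [hNI, Finset.mem_filter, Finset.mem_univ, true_and] at hσ ⊢
      intro h; apply hσ
      have := congrArg (fun τ : Equiv.Perm (Fin r) => τ⁻¹) h
      simpa [_root_.mul_inv_rev] using this
    have hfpair : ∀ σ : Equiv.Perm (Fin r), f σ⁻¹ = f σ := by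
      intro σ
      rw [hf]
      dsimp only
      have hs : Equiv.Perm.sign σ⁻¹ = Equiv.Perm.sign σ := Equiv.Perm.sign_inv σ
      have hp : ∏ i, D (σ⁻¹ i) i = ∏ i, D (σ i) i := by
        calc ∏ i, D (σ⁻¹ i) i = ∏ j, D (σ⁻¹ (σ j)) (σ j) :=
              (Equiv.prod_comp σ (fun i => D (σ⁻¹ i) i)).symm
          _ = ∏ j, D j (σ j) :=
              Finset.prod_congr rfl fun j _ => by simp
          _ = ∏ j, D (σ j) j := Finset.prod_congr rfl fun j _ => hsymm' j (σ j)
      rw [hs, hp]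
    have hne : ∀ σ ∈ NI, σ⁻¹ ≠ σ := by
      intro σ hσ h
      simp only [hNI, Finset.mem_filter, Finset.mem_univ, true_and] at hσ
      refine hσ ?_
      nth_rewrite 2 [← h]
      simp
    rw [← Finset.sum_filter_add_sum_filter_not NI (fun σ => κ σ < κ σ⁻¹)]
    have hswap : ∑ σ ∈ NI.filter (fun σ => ¬ κ σ < κ σ⁻¹), f σ
        = ∑ σ ∈ NI.filter (fun σ => κ σ < κ σ⁻¹), f σ := by
      refine Finset.sum_nbij' (fun σ => σ⁻¹) (fun σ => σ⁻¹) ?_ ?_ ?_ ?_ ?_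
      · intro σ hσ
        simp only [Finset.mem_filter] at hσ ⊢
        refine ⟨hinvNI σ hσ.1, ?_⟩
        rw [inv_inv]
        rcases Nat.lt_or_ge (κ σ⁻¹) (κ σ) with h | h
        · exact h
        · exfalso
          have : κ σ = κ σ⁻¹ := le_antisymm (by omega) (by omega)
          exact hne σ hσ.1 (hκinj this).symm
      · intro σ hσ
        simp only [Finset.mem_filter] at hσ ⊢
        refine ⟨hinvNI σ hσ.1, ?_⟩
        rw [inv_inv]
        omega
      · intro a _; exact inv_inv a
      · intro a _; exact inv_inv a
      · intro a _; exact (hfpair a).symm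
    rw [hswap, ← Finset.sum_add_distrib]
    refine v.map_le_sum fun σ hσ => ?_
    have hff : f σ + f σ = ((Equiv.Perm.sign σ : ℤ) : K) * ∏ i, (2 * D (σ i) i) := by
      have hr1 : 1 ≤ r := hr.pos
      have h2r : (2 : K) * 2 ^ (r - 1) = 2 ^ r := by
        rw [← pow_succ']; congr 1; omega
      have hprod : ∏ i, ((2 : K) * D (σ i) i) = 2 ^ r * ∏ i, D (σ i) i := by
        rw [Finset.prod_mul_distrib, Finset.prod_const, Finset.card_univ, Fintype.card_fin]
      rw [hf]
      dsimp only
      rw [hprod, ← h2r]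
      ring
    rw [hff, vsign_mul, vprod]
    refine half_le ?_
    calc t + t ≤ (∑ i, c i) + ∑ i, c i := add_le_add ht ht
      _ = (∑ i, c (σ i)) + ∑ i, c i := by rw [Equiv.sum_comp σ c]
      _ = ∑ i, (c (σ i) + c i) := (Finset.sum_add_distrib).symm
      _ ≤ ∑ i, (v (2 * D (σ i) i) + v (2 * D (σ i) i)) :=
          Finset.sum_le_sum fun i _ => hb (σ i) i
      _ = (∑ i, v (2 * D (σ i) i)) + ∑ i, v (2 * D (σ i) i) := Finset.sum_add_distrib

end Bounds
lemma fin_le_strictMono {n r : ℕ} (e : Fin r → Fin n) (he : StrictMono e) :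
    ∀ (k : ℕ) (hk : k < r), k ≤ (e ⟨k, hk⟩ : ℕ) := by
  intro k
  induction k with
  | zero => intro hk; exact Nat.zero_le _
  | succ k ih =>
    intro hk
    have hk' : k < r := by omega
    have h1 := ih hk'
    have h2 : e ⟨k, hk'⟩ < e ⟨k + 1, hk⟩ := he (by simp [Fin.lt_def])
    have h3 : (e ⟨k, hk'⟩ : ℕ) < (e ⟨k + 1, hk⟩ : ℕ) := h2
    omega

lemma KM {n r : ℕ} (hrn : r ≤ n) (A : Fin n → WithTop ℤ) (hA : Monotone A)
    (e : Fin r → Fin n) (he : StrictMono e) :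
    ∑ k ∈ Finset.univ.filter (fun k : Fin n => (k : ℕ) < r), A k ≤ ∑ i : Fin r, A (e i) := by
  have hstep : ∑ k ∈ Finset.univ.filter (fun k : Fin n => (k : ℕ) < r), A k
      = ∑ i : Fin r, A (Fin.castLE hrn i) := by
    refine Finset.sum_bij' (i := fun k hk => (⟨(k : ℕ), by simpa using hk⟩ : Fin r))
      (j := fun i _ => Fin.castLE hrn i) ?_ ?_ ?_ ?_ ?_
    · intro k hk; exact Finset.mem_univ _
    · intro i _
      simp only [Finset.mem_filter, Finset.mem_univ, true_and]
      exact i.2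
    · intro k hk; exact Fin.ext rfl
    · intro i _; exact Fin.ext rfl
    · intro k hk; exact congrArg A (Fin.ext rfl)
  rw [hstep]
  refine Finset.sum_le_sum fun i _ => hA ?_
  rw [Fin.le_def]
  simpa using fin_le_strictMono e he (i : ℕ) i.2
/-- Split a sum over pairs into a diagonal part and a doubled half off-diagonal part,
for a symmetric summand. -/
lemma pair_split {M : Type*} [AddCommMonoid M] {ι : Type*} [Fintype ι] [DecidableEq ι]
    (f g : ι × ι → M) (hsym : ∀ q : ι × ι, f q.swap = f q) (hfg : ∀ q, f q + f q = g q) :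
    ∃ D O : Finset (ι × ι), (∀ q ∈ D, q.1 = q.2) ∧ (∀ q ∈ O, q.1 ≠ q.2) ∧
      ∑ q : ι × ι, f q = (∑ q ∈ D, f q) + ∑ q ∈ O, g q := by
  classical
  set κ : ι → ℕ := fun x => ((Fintype.equivFin ι) x : ℕ) with hκ
  have hκinj : Function.Injective κ := fun x y h => (Fintype.equivFin ι).injective (Fin.ext h)
  set D : Finset (ι × ι) := Finset.univ.filter (fun q => q.1 = q.2) with hD
  set O : Finset (ι × ι) :=
    (Finset.univ.filter (fun q : ι × ι => ¬ q.1 = q.2)).filter (fun q => κ q.1 < κ q.2)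
    with hO
  set O' : Finset (ι × ι) :=
    (Finset.univ.filter (fun q : ι × ι => ¬ q.1 = q.2)).filter (fun q => ¬ κ q.1 < κ q.2)
    with hO'
  refine ⟨D, O, fun q hq => by simpa [hD] using hq,
    fun q hq => by
      have := (Finset.mem_filter.mp (Finset.mem_filter.mp hq).1).2
      exact this, ?_⟩
  have h1 : ∑ q : ι × ι, f q = (∑ q ∈ D, f q) + ∑ q ∈ Finset.univ.filter
      (fun q : ι × ι => ¬ q.1 = q.2), f q := by
    rw [hD, Finset.sum_filter_add_sum_filter_not]
  have h2 : ∑ q ∈ Finset.univ.filter (fun q : ι × ι => ¬ q.1 = q.2), f q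
      = (∑ q ∈ O, f q) + ∑ q ∈ O', f q := by
    rw [hO, hO', Finset.sum_filter_add_sum_filter_not]
  have h3 : ∑ q ∈ O', f q = ∑ q ∈ O, f q := by
    refine Finset.sum_nbij' (fun q => q.swap) (fun q => q.swap) ?_ ?_ ?_ ?_ ?_
    · intro q hq
      simp only [hO', hO, Finset.mem_filter, Finset.mem_univ, true_and, Prod.fst_swap,
        Prod.snd_swap] at hq ⊢
      obtain ⟨hne, hlt⟩ := hq
      have hk : κ q.1 ≠ κ q.2 := fun h => hne (hκinj h)
      exact ⟨fun h => hne h.symm, by omega⟩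
    · intro q hq
      simp only [hO', hO, Finset.mem_filter, Finset.mem_univ, true_and, Prod.fst_swap,
        Prod.snd_swap] at hq ⊢
      obtain ⟨hne, hlt⟩ := hq
      exact ⟨fun h => hne h.symm, by omega⟩
    · intro q _; exact Prod.swap_swap q
    · intro q _; exact Prod.swap_swap q
    · intro q _; exact (hsym q).symm
  have h4 : (∑ q ∈ O, f q) + ∑ q ∈ O, f q = ∑ q ∈ O, g q := by
    rw [← Finset.sum_add_distrib]
    exact Finset.sum_congr rfl fun q _ => hfg q
  rw [h1, h2, h3, h4]
/-- `S(B)`: nondecreasing sequences `(a_1,…,a_n)` of nonnegative integers with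
`ord(b_ii) ≥ a_i` and `ord(2 b_ij) ≥ (a_i+a_j)/2`. -/
def Sset {K : Type} [Field K] (v : AddValuation K (WithTop ℤ)) {n : ℕ}
    (B : Matrix (Fin n) (Fin n) K) : Set (Fin n → ℕ) :=
  {a | Monotone a ∧ (∀ i, ((a i : ℤ) : WithTop ℤ) ≤ v (B i i)) ∧
    ∀ i j, (((a i : ℤ) + (a j : ℤ) : ℤ) : WithTop ℤ) ≤ v (2 * B i j) + v (2 * B i j)}

/-- `S({B}) = ⋃_{U ∈ GL_n(𝔬)} S(ᵗU·B·U)`. -/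
def SsetFull {K : Type} [Field K] (v : AddValuation K (WithTop ℤ)) {n : ℕ}
    (B : Matrix (Fin n) (Fin n) K) : Set (Fin n → ℕ) :=
  {a | ∃ U : Matrix (Fin n) (Fin n) K, (∀ i j, 0 ≤ v (U i j)) ∧
    (∃ W : Matrix (Fin n) (Fin n) K,
      (∀ i j, 0 ≤ v (W i j)) ∧ U * W = 1 ∧ W * U = 1) ∧
    a ∈ Sset v (Uᵀ * B * U)}

/-- The lexicographic order on `Fin n → ℕ` (`a ⪯_lex b`). -/
def lexLe {n : ℕ} (a b : Fin n → ℕ) : Prop :=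
  a = b ∨ ∃ k : Fin n, (∀ l : Fin n, l < k → a l = b l) ∧ a k < b k

/-- `𝔢_i(a)` for a sequence `a` (with `i` ranging over `1,…,n`, 1-based). -/
def eGK {n : ℕ} (a : Fin n → ℕ) (i : ℕ) : ℕ :=
  if Odd i then ∑ k ∈ Finset.univ.filter (fun k : Fin n => (k : ℕ) < i), a k
  else 2 * ((∑ k ∈ Finset.univ.filter (fun k : Fin n => (k : ℕ) < i), a k) / 2)

set_option maxHeartbeats 1000000 in
theorem statement4 (p : ℕ) [Fact (Nat.Prime p)]
    (K : Type) [Field K] [Algebra ℚ_[p] K] [FiniteDimensional ℚ_[p] K]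
    [Algebra ℤ_[p] K] [IsScalarTower ℤ_[p] ℚ_[p] K]
    (v : AddValuation K (WithTop ℤ))
    (hv0 : ∀ x : K, v x = ⊤ ↔ x = 0)
    (hvint : ∀ x : K, 0 ≤ v x ↔ IsIntegral ℤ_[p] x)
    (hvnorm : ∃ π : K, v π = 1)
    (n : ℕ)
    (B : Matrix (Fin n) (Fin n) K) (hsymm : B.IsSymm)
    (hdiag : ∀ i, 0 ≤ v (B i i))
    (hoff : ∀ i j, i ≠ j → 0 ≤ v (2 * B i j))
    (hnd : B.det ≠ 0)
    -- `a = GK(B)` is the Gross–Keating invariant of `B`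
    (a : Fin n → ℕ)
    (hGK : a ∈ SsetFull v B ∧ ∀ b ∈ SsetFull v B, lexLe b a)
    (r : ℕ) (hr1 : 1 ≤ r) (hrn : r ≤ n - 1) :
    ∀ X : Matrix (Fin n) (Fin r) K, (∀ i j, 0 ≤ v (X i j)) →
      (Xᵀ * B * X).det ≠ 0 →
      ((eGK a r : ℤ) : WithTop ℤ) ≤ v ((2 : K) ^ (2 * (r / 2)) * (Xᵀ * B * X).det) := by
  classical
  obtain ⟨⟨U, hU, ⟨W, hW, hUW, hWU⟩, hmono, hdiagS, hoffS⟩, -⟩ := hGK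
  intro X hX hdet
  have hrn' : r ≤ n := by omega
  have h2 : (0 : WithTop ℤ) ≤ v (2 : K) := by
    refine (hvint 2).mpr ?_
    have h := map_ofNat (algebraMap ℤ_[p] K) 2
    rw [← h]
    exact isIntegral_algebraMap
  set C : Matrix (Fin n) (Fin n) K := Uᵀ * B * U with hC
  set Y : Matrix (Fin n) (Fin r) K := W * X with hY
  have h1 : U * (W * X) = X := by rw [← Matrix.mul_assoc, hUW, Matrix.one_mul]
  have h3 : Wᵀ * Uᵀ = (1 : Matrix (Fin n) (Fin n) K) := by
    rw [← Matrix.transpose_mul, hUW, Matrix.transpose_one]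
  have hYX : Yᵀ * C * Y = Xᵀ * B * X := by
    rw [hY, hC]
    simp only [Matrix.transpose_mul, Matrix.mul_assoc]
    rw [h1, ← Matrix.mul_assoc Wᵀ Uᵀ (B * X), h3, Matrix.one_mul]
  have hCs : Cᵀ = C := by
    rw [hC]
    calc (Uᵀ * B * U)ᵀ = Uᵀ * (Bᵀ * Uᵀᵀ) := by
          simp only [Matrix.transpose_mul, Matrix.transpose_transpose, Matrix.mul_assoc]
      _ = Uᵀ * B * U := by rw [hsymm.eq, Matrix.transpose_transpose, Matrix.mul_assoc]
  have hYv : ∀ i j, 0 ≤ v (Y i j) := by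
    intro i j
    rw [hY, Matrix.mul_apply]
    exact v.map_le_sum fun k _ => by
      rw [v.map_mul]; exact add_nonneg (hW i k) (hX k j)
  set A : Fin n → WithTop ℤ := fun k => ((a k : ℤ) : WithTop ℤ) with hA
  have hAmono : Monotone A := by
    intro i j hij
    have h : ((a i : ℤ) : WithTop ℤ) ≤ ((a j : ℤ) : WithTop ℤ) := by
      exact_mod_cast hmono hij
    exact h
  set m : ℕ := ∑ k ∈ Finset.univ.filter (fun k : Fin n => (k : ℕ) < r), a k with hm
  set t : WithTop ℤ := ((m : ℤ) : WithTop ℤ) with htdef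
  have ht_eq : t = ∑ k ∈ Finset.univ.filter (fun k : Fin n => (k : ℕ) < r), A k := by
    rw [htdef, hm, hA]
    push_cast
    rfl
  have hsubmul : ∀ S : {S : Finset (Fin n) // S.card = r},
      (Yᵀ * C).submatrix id (emb S) = Yᵀ * (C.submatrix id (emb S)) := by
    intro S; ext i j; simp [Matrix.mul_apply, Matrix.submatrix_apply]
  have hCsub : ∀ S : {S : Finset (Fin n) // S.card = r},
      ((Yᵀ * C).submatrix id (emb S)).det
        = ((C.submatrix (emb S) id) * Y).det := by
    intro S
    rw [hsubmul S, ← Matrix.det_transpose, Matrix.transpose_mul,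
      Matrix.transpose_submatrix, hCs, Matrix.transpose_transpose]
  have hCB : (Yᵀ * C * Y).det
      = ∑ S : {S : Finset (Fin n) // S.card = r},
        ∑ T : {S : Finset (Fin n) // S.card = r},
          (C.submatrix (emb S) (emb T)).det * (Y.submatrix (emb T) id).det
            * (Y.submatrix (emb S) id).det := by
    rw [cauchyBinet (Yᵀ * C) Y]
    refine Finset.sum_congr rfl fun S _ => ?_
    rw [hCsub S, cauchyBinet (C.submatrix (emb S) id) Y, Finset.sum_mul]
    refine Finset.sum_congr rfl fun T _ => ?_
    rw [Matrix.submatrix_submatrix]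
    rfl
  have hKM : ∀ S : {S : Finset (Fin n) // S.card = r}, t ≤ ∑ i : Fin r, A (emb S i) := by
    intro S
    rw [ht_eq]
    exact KM hrn' A hAmono (emb S) (emb_strictMono S)
  have hboff : ∀ (S T : {S : Finset (Fin n) // S.card = r}) (i j : Fin r),
      A (emb S i) + A (emb T j) ≤ v (2 * (C.submatrix (emb S) (emb T)) i j)
        + v (2 * (C.submatrix (emb S) (emb T)) i j) := by
    intro S T i j
    have h := hoffS (emb S i) (emb T j)
    push_cast at h
    exact h
  have hP1 : ∀ S T : {S : Finset (Fin n) // S.card = r},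
      t ≤ v ((2 : K) ^ r * (C.submatrix (emb S) (emb T)).det) :=
    fun S T => det_bound v _ (fun i => A (emb S i)) (fun j => A (emb T j)) (hboff S T) t
      (add_le_add (hKM S) (hKM T))
  have hYdet : ∀ S : {S : Finset (Fin n) // S.card = r},
      (0 : WithTop ℤ) ≤ v ((Y.submatrix (emb S) id).det) :=
    fun S => vdet_nonneg v _ fun i j => hYv _ _
  have hgoal1 : ((eGK a r : ℤ) : WithTop ℤ) ≤ t := by
    rw [htdef]
    have h : eGK a r ≤ m := by
      rw [eGK, hm]
      split_ifs <;> omega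
    exact_mod_cast WithTop.coe_le_coe.mpr (Int.ofNat_le.mpr h)
  refine le_trans hgoal1 ?_
  rw [← hYX]
  rcases Nat.even_or_odd r with hre | hro
  · -- even case
    have hexp : 2 * (r / 2) = r := by
      obtain ⟨k, hk⟩ := hre; omega
    rw [hexp, hCB, Finset.mul_sum]
    refine v.map_le_sum fun S _ => ?_
    rw [Finset.mul_sum]
    refine v.map_le_sum fun T _ => ?_
    calc t ≤ v ((2 : K) ^ r * (C.submatrix (emb S) (emb T)).det) := hP1 S T
      _ ≤ v ((2 : K) ^ r * (C.submatrix (emb S) (emb T)).det)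
            + (v ((Y.submatrix (emb T) id).det) + v ((Y.submatrix (emb S) id).det)) :=
          le_add_of_nonneg_right (add_nonneg (hYdet T) (hYdet S))
      _ = v ((2 : K) ^ r * ((C.submatrix (emb S) (emb T)).det * (Y.submatrix (emb T) id).det
            * (Y.submatrix (emb S) id).det)) := by
          rw [v.map_mul, v.map_mul, v.map_mul, v.map_mul]
          simp only [add_assoc]
  · -- odd case
    have hexp : 2 * (r / 2) = r - 1 := by
      obtain ⟨k, hk⟩ := hro; omega
    rw [hexp]
    have hP2 : ∀ S : {S : Finset (Fin n) // S.card = r},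
        t ≤ v ((2 : K) ^ (r - 1) * (C.submatrix (emb S) (emb S)).det) := by
      intro S
      refine det_bound_sym v hro _ ?_ (fun i => A (emb S i)) t
        (fun i => hdiagS (emb S i)) (hboff S S) (hKM S) h2
      rw [Matrix.transpose_submatrix, hCs]
    set G : {S : Finset (Fin n) // S.card = r} × {S : Finset (Fin n) // S.card = r} → K :=
      fun q => (C.submatrix (emb q.1) (emb q.2)).det * (Y.submatrix (emb q.2) id).det
        * (Y.submatrix (emb q.1) id).det with hG
    have hGsym : ∀ q : {S : Finset (Fin n) // S.card = r} × {S : Finset (Fin n) // S.card = r},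
        G q.swap = G q := by
      intro q
      rw [hG]
      dsimp only [Prod.fst_swap, Prod.snd_swap]
      have hdet2 : (C.submatrix (emb q.2) (emb q.1)).det
          = (C.submatrix (emb q.1) (emb q.2)).det := by
        rw [← Matrix.det_transpose, Matrix.transpose_submatrix, hCs]
      rw [hdet2]
      ring
    have h2r : (2 : K) * 2 ^ (r - 1) = 2 ^ r := by
      rw [← pow_succ']; congr 1; omega
    obtain ⟨D, O, hDd, hOo, hsum⟩ := pair_split (fun q => (2 : K) ^ (r - 1) * G q)
      (fun q => (2 : K) ^ r * G q)
      (fun q => by rw [hGsym q])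
      (fun q => by
        calc (2 : K) ^ (r - 1) * G q + 2 ^ (r - 1) * G q
            = ((2 : K) * 2 ^ (r - 1)) * G q := by ring
          _ = 2 ^ r * G q := by rw [h2r])
    have hdet3 : (2 : K) ^ (r - 1) * (Yᵀ * C * Y).det
        = ∑ q : {S : Finset (Fin n) // S.card = r} × {S : Finset (Fin n) // S.card = r},
          (2 : K) ^ (r - 1) * G q := by
      rw [hCB, Fintype.sum_prod_type, Finset.mul_sum]
      exact Finset.sum_congr rfl fun S _ => by rw [Finset.mul_sum]
    rw [hdet3, hsum]
    refine v.map_le_add (v.map_le_sum fun q hq => ?_) (v.map_le_sum fun q hq => ?_)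
    · have hqd : q.1 = q.2 := hDd q hq
      calc t ≤ v ((2 : K) ^ (r - 1) * (C.submatrix (emb q.1) (emb q.1)).det) := hP2 q.1
        _ ≤ v ((2 : K) ^ (r - 1) * (C.submatrix (emb q.1) (emb q.1)).det)
              + (v ((Y.submatrix (emb q.1) id).det) + v ((Y.submatrix (emb q.1) id).det)) :=
            le_add_of_nonneg_right (add_nonneg (hYdet q.1) (hYdet q.1))
        _ = v ((2 : K) ^ (r - 1) * G q) := by
            rw [hG]
            dsimp only
            rw [← hqd]
            rw [v.map_mul, v.map_mul, v.map_mul, v.map_mul]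
            simp only [add_assoc]
    · calc t ≤ v ((2 : K) ^ r * (C.submatrix (emb q.1) (emb q.2)).det) := hP1 q.1 q.2
        _ ≤ v ((2 : K) ^ r * (C.submatrix (emb q.1) (emb q.2)).det)
              + (v ((Y.submatrix (emb q.2) id).det) + v ((Y.submatrix (emb q.1) id).det)) :=
            le_add_of_nonneg_right (add_nonneg (hYdet q.2) (hYdet q.1))
        _ = v ((2 : K) ^ r * G q) := by
            rw [hG]
            dsimp only
            rw [v.map_mul, v.map_mul, v.map_mul, v.map_mul]
            simp only [add_assoc]
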